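/- Let B ∈ Mat(M, ℂ) and r > 0 with no eigenvalue of B of modulus r, and let 𝓡 = (1/2πi)∮_{|z|=r} (z·1 − B)⁻¹ dz be the Riesz projection onto the eigenvalues inside the circle. Then 1 − 𝓡 equals the Riesz projection of B⁻¹ (when B is invertible) for the circle of radius r⁻¹: 1 − 𝓡 = (1/2πi)∮_{|z|=r⁻¹} (z·1 − B⁻¹)⁻¹ dz. -/

import Mathlib

open Matrix

attribute [local instance] Matrix.linftyOpNormedAddCommGroup Matrix.linftyOpNormedRing
  Matrix.linftyOpNormedAlgebra

noncomputable section

section aux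

variable {M : ℕ} (B : Matrix (Fin M) (Fin M) ℂ)

lemma key_inv (hB : IsUnit B.det) (w : ℂ) (hw : w ≠ 0)
    (hU : IsUnit ((w • (1 : Matrix (Fin M) (Fin M) ℂ) - B).det)) :
    (w⁻¹ • (1 : Matrix (Fin M) (Fin M) ℂ) - B⁻¹)⁻¹
      = w • 1 - (w ^ 2) • (w • (1 : Matrix (Fin M) (Fin M) ℂ) - B)⁻¹ := by
  set C : Matrix (Fin M) (Fin M) ℂ := (w • (1 : Matrix (Fin M) (Fin M) ℂ) - B)⁻¹ with hC
  apply Matrix.inv_eq_right_inv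
  have h3 : (w • (1 : Matrix (Fin M) (Fin M) ℂ) - B) * C = 1 := Matrix.mul_nonsing_inv _ hU
  have h2 : B⁻¹ * B = 1 := Matrix.nonsing_inv_mul B hB
  have hw1 : w • C = 1 + B * C := by
    have := h3
    rw [sub_mul, smul_mul_assoc, one_mul] at this
    rw [← this]; abel
  have e1 : w • (B⁻¹ * C) = B⁻¹ + C := by
    calc w • (B⁻¹ * C) = B⁻¹ * (w • C) := by rw [mul_smul_comm]
      _ = B⁻¹ * 1 + (B⁻¹ * B) * C := by rw [hw1, mul_add, mul_assoc]
      _ = B⁻¹ + C := by rw [h2, one_mul, mul_one]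
  have e2 : (w ^ 2) • (B⁻¹ * C) = w • B⁻¹ + w • C := by
    rw [pow_two, mul_smul, e1, smul_add]
  have hBB : B⁻¹ * B⁻¹⁻¹ = 1 := by
    rw [Matrix.nonsing_inv_nonsing_inv B hB, h2]
  rw [sub_mul, mul_sub, mul_sub, smul_mul_assoc, smul_mul_assoc, one_mul, one_mul,
    mul_smul_comm, mul_smul_comm, mul_one, smul_smul, smul_smul]
  have e3 : w⁻¹ * w ^ 2 = w := by field_simp
  rw [e3, e2, inv_mul_cancel₀ hw, one_smul]
  abel

end aux

section aux2

variable {M : ℕ} (B : Matrix (Fin M) (Fin M) ℂ)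

lemma unit_det_of_not_spec {r : ℝ} (hr : 0 < r)
    (hspec : ∀ z ∈ spectrum ℂ B, ‖z‖ ≠ r) (w : ℂ) (hw : ‖w‖ = r) :
    IsUnit ((w • (1 : Matrix (Fin M) (Fin M) ℂ) - B).det) := by
  have hns : w ∉ spectrum ℂ B := fun h => hspec w h hw
  rw [spectrum.notMem_iff] at hns
  rw [← Matrix.isUnit_iff_isUnit_det, ← Algebra.algebraMap_eq_smul_one]
  exact hns

lemma contOn_resolvent {r : ℝ} (hr : 0 < r)
    (hspec : ∀ z ∈ spectrum ℂ B, ‖z‖ ≠ r) :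
    ContinuousOn (fun w : ℂ => (w • (1 : Matrix (Fin M) (Fin M) ℂ) - B)⁻¹)
      (Metric.sphere (0 : ℂ) r) := by
  have hcont : Continuous (fun w : ℂ => w • (1 : Matrix (Fin M) (Fin M) ℂ) - B) :=
    (continuous_id.smul continuous_const).sub continuous_const
  simp only [Matrix.inv_def, Ring.inverse_eq_inv']
  apply ContinuousOn.fun_smul
  · apply ContinuousOn.inv₀ hcont.matrix_det.continuousOn
    intro w hw
    have habs : ‖w‖ = r := by
      simpa using (mem_sphere_zero_iff_norm.mp hw)
    exact (unit_det_of_not_spec B hr hspec w habs).ne_zero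
  · exact hcont.matrix_adjugate.continuousOn

end aux2

theorem riesz_projection_complement (M : ℕ) (hM : 1 ≤ M)
    (B : Matrix (Fin M) (Fin M) ℂ) (hB : IsUnit B.det)
    (r : ℝ) (hr : 0 < r)
    (hspec : ∀ z ∈ spectrum ℂ B, ‖z‖ ≠ r) :
    (1 : Matrix (Fin M) (Fin M) ℂ)
        - (2 * Real.pi * Complex.I : ℂ)⁻¹
            • (∮ z in C(0, r), (z • (1 : Matrix (Fin M) (Fin M) ℂ) - B)⁻¹)
      = (2 * Real.pi * Complex.I : ℂ)⁻¹
          • (∮ z in C(0, r⁻¹), (z • (1 : Matrix (Fin M) (Fin M) ℂ) - B⁻¹)⁻¹) := by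
  have hr' : (0:ℝ) < r⁻¹ := by positivity
  set G : ℝ → Matrix (Fin M) (Fin M) ℂ := fun θ =>
    deriv (circleMap 0 r) θ •
      ((circleMap 0 r θ)⁻¹ • (1 : Matrix (Fin M) (Fin M) ℂ)
        - (circleMap 0 r θ • (1 : Matrix (Fin M) (Fin M) ℂ) - B)⁻¹) with hG
  have hGper : Function.Periodic G (2 * Real.pi) := by
    intro θ
    simp only [hG, deriv_circleMap, periodic_circleMap 0 r θ]
  -- Step A
  have stepA : (∮ z in C(0, r⁻¹), (z • (1 : Matrix (Fin M) (Fin M) ℂ) - B⁻¹)⁻¹)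
      = ∮ w in C(0, r), (w⁻¹ • (1 : Matrix (Fin M) (Fin M) ℂ)
          - (w • (1 : Matrix (Fin M) (Fin M) ℂ) - B)⁻¹) := by
    rw [circleIntegral, circleIntegral]
    have hpt : ∀ θ : ℝ,
        deriv (circleMap 0 r⁻¹) θ •
          ((circleMap 0 r⁻¹ θ) • (1 : Matrix (Fin M) (Fin M) ℂ) - B⁻¹)⁻¹ = G (-θ) := by
      intro θ
      have hwz : circleMap 0 r (-θ) = (circleMap 0 r⁻¹ θ)⁻¹ := by
        simp only [circleMap, zero_add, mul_inv, Complex.ofReal_inv, inv_inv,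
          ← Complex.exp_neg, Complex.ofReal_neg]
        ring_nf
      set w : ℂ := circleMap 0 r (-θ) with hwdef
      have habsw : ‖w‖ = r := by
        rw [hwdef, norm_circleMap_zero, abs_of_pos hr]
      have hw0 : w ≠ 0 := by
        intro h0
        rw [h0] at habsw
        simp at habsw
        exact absurd habsw.symm (ne_of_gt hr)
      have hz : circleMap 0 r⁻¹ θ = w⁻¹ := by rw [hwz, inv_inv]
      have hU : IsUnit ((w • (1 : Matrix (Fin M) (Fin M) ℂ) - B).det) :=
        unit_det_of_not_spec B hr hspec w habsw
      rw [hz, key_inv B hB w hw0 hU]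
      simp only [hG, deriv_circleMap, ← hwdef]
      rw [hz, smul_sub, smul_sub]
      match_scalars <;> field_simp <;> ring
    calc (∫ θ in (0:ℝ)..2 * Real.pi, deriv (circleMap 0 r⁻¹) θ •
            ((circleMap 0 r⁻¹ θ) • (1 : Matrix (Fin M) (Fin M) ℂ) - B⁻¹)⁻¹)
        = ∫ θ in (0:ℝ)..2 * Real.pi, G (-θ) := by
          exact intervalIntegral.integral_congr (fun θ _ => hpt θ)
      _ = ∫ θ in (-(2 * Real.pi))..(0:ℝ), G θ := by
          have := intervalIntegral.integral_comp_neg (f := G) (a := -(2 * Real.pi)) (b := 0)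
          simpa using this
      _ = ∫ θ in (0:ℝ)..2 * Real.pi, G θ := by
          have h := hGper.intervalIntegral_add_eq (-(2 * Real.pi)) 0
          simp only [neg_add_cancel, zero_add] at h
          exact h
  -- Step B
  have hcont := contOn_resolvent B hr hspec
  have hint1 : CircleIntegrable
      (fun w : ℂ => (w • (1 : Matrix (Fin M) (Fin M) ℂ) - B)⁻¹) 0 r :=
    hcont.circleIntegrable hr.le
  have hcont2 : ContinuousOn (fun w : ℂ => w⁻¹ • (1 : Matrix (Fin M) (Fin M) ℂ))
      (Metric.sphere (0 : ℂ) r) := by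
    apply ContinuousOn.fun_smul _ continuousOn_const
    apply ContinuousOn.inv₀ continuousOn_id
    intro w hw
    have : ‖w‖ = r := by
      simpa using (mem_sphere_zero_iff_norm.mp hw)
    intro h0
    simp only [id_eq] at h0
    rw [h0] at this
    simp at this
    exact absurd this.symm (ne_of_gt hr)
  have hint2 : CircleIntegrable
      (fun w : ℂ => w⁻¹ • (1 : Matrix (Fin M) (Fin M) ℂ)) 0 r :=
    hcont2.circleIntegrable hr.le
  have hinv : (∮ z in C(0, r), z⁻¹) = 2 * Real.pi * Complex.I := by
    have h0 : (0:ℂ) ∈ Metric.ball (0:ℂ) r := Metric.mem_ball_self hr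
    have := circleIntegral.integral_sub_inv_of_mem_ball h0
    simpa using this
  have stepB : (∮ w in C(0, r), (w⁻¹ • (1 : Matrix (Fin M) (Fin M) ℂ)
        - (w • (1 : Matrix (Fin M) (Fin M) ℂ) - B)⁻¹))
      = (2 * Real.pi * Complex.I : ℂ) • (1 : Matrix (Fin M) (Fin M) ℂ)
        - ∮ w in C(0, r), (w • (1 : Matrix (Fin M) (Fin M) ℂ) - B)⁻¹ := by
    rw [circleIntegral.integral_sub hint2 hint1,
      circleIntegral.integral_smul_const (fun z : ℂ => z⁻¹) 1 0 r, hinv]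
  rw [stepA, stepB, smul_sub, smul_smul]
  have hne : (2 * Real.pi * Complex.I : ℂ) ≠ 0 := by
    simp [Real.pi_ne_zero, Complex.I_ne_zero]
  rw [inv_mul_cancel₀ hne, one_smul]
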